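/- arXiv:2408.05703 — 3 statements merged into one kernel-verified Lean document; each statement's English description precedes it below -/
import Mathlib

section
/- In a digraph whose underlying graph is chordal, a shortest directed cycle has length exactly 3, provided the digraph contains at least one directed cycle and no antiparallel arcs. -/
/-- A directed cycle (dicycle) in a digraph with arc relation `A`, given by its list of
vertices: all vertices distinct, consecutive vertices joined by arcs, and an arc from the
last vertex back to the first. -/
def IsDicycle {V : Type*} (A : V → V → Prop) : List V → Prop
  | [] => False
  | v :: l => (v :: l).Nodup ∧ List.Chain A v (l ++ [v])

/-- The arcs of a cyclic list of vertices (consecutive pairs, including the wrap-around). -/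
def cycleArcs {V : Type*} : List V → List (V × V)
  | [] => []
  | v :: l => List.zip (v :: l) (l ++ [v])

/-- A relation is acyclic if it admits no dicycle. -/
def AcyclicRel {V : Type*} (A : V → V → Prop) : Prop := ∀ l : List V, ¬ IsDicycle A l

/-- A transversal of the digraph `A`: a set of arcs meeting every dicycle. -/
def IsTransversal {V : Type*} (A : V → V → Prop) (T : Set (V × V)) : Prop :=
  (∀ e ∈ T, A e.1 e.2) ∧ ∀ l, IsDicycle A l → ∃ e ∈ cycleArcs l, e ∈ T

/-- The digraph `A` has a packing of `k` pairwise disjoint transversals. -/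
def HasPacking {V : Type*} (A : V → V → Prop) (k : ℕ) : Prop :=
  ∃ T : Fin k → Set (V × V), (∀ i, IsTransversal A (T i)) ∧
    Pairwise fun i j => Disjoint (T i) (T j)

/-- `ν(G)`: the maximum size of a packing of disjoint dicycle-transversals. -/
noncomputable def dinu {V : Type*} (A : V → V → Prop) : ℕ := sSup {k | HasPacking A k}

/-- `g(G)`: the length of a shortest dicycle. -/
noncomputable def digirth {V : Type*} (A : V → V → Prop) : ℕ :=
  sInf {n | ∃ l, IsDicycle A l ∧ l.length = n}

/-- A graph is chordal if every induced cycle (a cycle all of whose support adjacencies are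
cycle edges) has length `3`. -/
def IsChordal {V : Type*} (G : SimpleGraph V) : Prop :=
  ∀ (v : V) (w : G.Walk v v), w.IsCycle →
    (∀ a ∈ w.support, ∀ b ∈ w.support, G.Adj a b → s(a, b) ∈ w.edges) →
    w.length = 3



namespace DigirthAux

variable {V : Type*}

def mkWalk (G : SimpleGraph V) : (l : List V) → (v u : V) →
    List.Chain G.Adj v (l ++ [u]) → G.Walk v u
  | [], v, u, h => SimpleGraph.Walk.cons (List.chain_cons.mp h).1 SimpleGraph.Walk.nil
  | w :: l, v, u, h =>
      SimpleGraph.Walk.cons (List.chain_cons.mp h).1 (mkWalk G l w u (List.chain_cons.mp h).2)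

lemma support_mkWalk (G : SimpleGraph V) : ∀ (l : List V) (v u : V)
    (h : List.Chain G.Adj v (l ++ [u])), (mkWalk G l v u h).support = v :: (l ++ [u])
  | [], v, u, h => by simp [mkWalk]
  | w :: l, v, u, h => by simp [mkWalk, support_mkWalk G l w u]; exact support_mkWalk G l w u _

lemma length_mkWalk (G : SimpleGraph V) : ∀ (l : List V) (v u : V)
    (h : List.Chain G.Adj v (l ++ [u])), (mkWalk G l v u h).length = l.length + 1
  | [], v, u, h => by simp [mkWalk]
  | w :: l, v, u, h => by simp [mkWalk, length_mkWalk G l w u]; exact length_mkWalk G l w u _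

lemma mem_edges_of_infix (G : SimpleGraph V) : ∀ (l : List V) (v u : V)
    (h : List.Chain G.Adj v (l ++ [u])) (x y : V),
    [x, y] <:+: v :: (l ++ [u]) → s(x, y) ∈ (mkWalk G l v u h).edges
  | [], v, u, h, x, y, hinf => by
    have := hinf.sublist.eq_of_length (by simp)
    simp at this
    simp [mkWalk, this.1, this.2]
  | w :: l, v, u, h, x, y, hinf => by
    rw [List.infix_cons_iff] at hinf
    rcases hinf with hpre | hinf
    · rcases hpre with ⟨t, ht⟩
      simp at ht
      simp [mkWalk, ht.1, ht.2.1]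
    · simp only [mkWalk, SimpleGraph.Walk.edges_cons, List.mem_cons]
      exact Or.inr (mem_edges_of_infix G l w u _ x y hinf)

lemma infix_of_mem_edges (G : SimpleGraph V) : ∀ (l : List V) (v u : V)
    (h : List.Chain G.Adj v (l ++ [u])) (e : Sym2 V),
    e ∈ (mkWalk G l v u h).edges → ∃ x y, e = s(x, y) ∧ [x, y] <:+: v :: (l ++ [u])
  | [], v, u, h, e, he => by
    simp [mkWalk] at he
    exact ⟨v, u, he, List.infix_refl _⟩
  | w :: l, v, u, h, e, he => by
    simp only [mkWalk, SimpleGraph.Walk.edges_cons, List.mem_cons] at he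
    rcases he with rfl | he
    · exact ⟨v, w, rfl, ⟨[], l ++ [u], by simp⟩⟩
    · obtain ⟨x, y, rfl, hinf⟩ := infix_of_mem_edges G l w u _ e he
      exact ⟨x, y, rfl, hinf.trans (List.infix_cons (List.infix_refl _))⟩

end DigirthAux

namespace DigirthAux
variable {V : Type*}

-- v ∉ t → no [v, z] infix of t ++ [v]
lemma not_infix_head (t : List V) (v z : V) (hv : v ∉ t) : ¬ [v, z] <:+: t ++ [v] := by
  rintro ⟨p, s, hps⟩
  apply hv
  have h1 : (p ++ [v, z] ++ s).dropLast = p ++ v :: (z :: s).dropLast := by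
    rw [show p ++ [v, z] ++ s = p ++ (v :: z :: s) by simp,
      List.dropLast_append_of_ne_nil (l := v :: z :: s) (by simp)]
    rfl
  have h2 : (t ++ [v]).dropLast = t := by simp
  rw [hps, h2] at h1
  rw [h1]
  simp

-- [z, v] infix of t ++ [v], v ∉ t → t ends with z
lemma getLast_of_infix (t : List V) (v z : V) (hv : v ∉ t)
    (h : [z, v] <:+: t ++ [v]) : ∃ t', t = t' ++ [z] := by
  obtain ⟨p, s, hps⟩ := h
  rcases List.eq_nil_or_concat s with rfl | ⟨s', a, rfl⟩
  · refine ⟨p, ?_⟩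
    have := congrArg List.dropLast hps
    rw [show p ++ [z, v] ++ [] = (p ++ [z]) ++ [v] by simp, List.dropLast_concat] at this
    simpa using this.symm
  · exfalso
    simp only [List.concat_eq_append] at hps
    apply hv
    have h1 : (p ++ [z, v] ++ (s' ++ [a])).dropLast = p ++ z :: v :: s' := by
      rw [show p ++ [z, v] ++ (s' ++ [a]) = (p ++ z :: v :: s') ++ [a] by simp,
        List.dropLast_concat]
    have h2 : (t ++ [v]).dropLast = t := by simp
    rw [hps, h2] at h1
    rw [h1]; simp

lemma head?_split (p s : List V) (a : V) : (p ++ a :: s).head? = (p ++ [a]).head? := by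
  cases p <;> simp

end DigirthAux

namespace DigirthAux
variable {V : Type*}

lemma chain_of_chain' {A : V → V → Prop} {b : V} {X : List V}
    (h : List.Chain' A (b :: X)) : List.Chain A b X := h

lemma key {A : V → V → Prop} (hanti : ∀ x y, A x y → ¬ A y x)
    {v : V} {t : List V} (hl : IsDicycle A (v :: t))
    (hmin : ∀ m, IsDicycle A m → (v :: t).length ≤ m.length)
    {a b : V} (ha : a ∈ v :: t) (hb : b ∈ v :: t) (hab : A a b) :
    [a, b] <:+: (v :: t) ++ [v] := by
  have hnd : (v :: t).Nodup := hl.1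
  have hch' : List.Chain' A ((v :: t) ++ [v]) := hl.2
  have hab' : a ≠ b := fun h => hanti a b hab (h ▸ hab)
  obtain ⟨p, s, hps⟩ := List.append_of_mem ha
  have hv' : (p ++ [a]).head? = some v := by
    rw [← head?_split p s a, ← hps]; rfl
  rw [hps] at hnd hch' hb hmin ⊢
  rcases List.mem_append.mp hb with hbp | hbs
  · -- b occurs before a
    obtain ⟨p₁, p₂, rfl⟩ := List.append_of_mem hbp
    -- shorter dicycle b :: (p₂ ++ [a])
    have minfix : (b :: (p₂ ++ [a])) <:+: ((p₁ ++ b :: p₂) ++ a :: s) :=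
      ⟨p₁, s, by simp⟩
    have nodupm : (b :: (p₂ ++ [a])).Nodup := hnd.sublist minfix.sublist
    have cm1 : List.Chain' A (b :: (p₂ ++ [a])) :=
      hch'.infix (minfix.trans ⟨[], [v], by simp⟩)
    have cm2 : List.Chain' A ((b :: (p₂ ++ [a])) ++ [b]) := by
      refine List.isChain_append.mpr ⟨cm1, List.isChain_singleton _, ?_⟩
      intro x hx y hy
      have hx' : x = a := by
        rw [show b :: (p₂ ++ [a]) = (b :: p₂) ++ [a] by simp, List.getLast?_concat] at hx
        exact (by simpa using hx : a = x).symm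
      have hy' : y = b := (by simpa using hy : b = y).symm
      rw [hx', hy']; exact hab
    have hdm : IsDicycle A (b :: (p₂ ++ [a])) := by
      refine ⟨nodupm, chain_of_chain' ?_⟩
      simpa [List.append_assoc] using cm2
    have hlen := hmin _ hdm
    simp only [List.length_append, List.length_cons, List.length_singleton, List.length_nil] at hlen
    have hp₁ : p₁.length = 0 := by omega
    have hs : s.length = 0 := by omega
    obtain rfl := List.length_eq_zero_iff.mp hp₁
    obtain rfl := List.length_eq_zero_iff.mp hs
    have h2 : v :: t = b :: (p₂ ++ [a]) := by simpa using hps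
    obtain ⟨rfl, -⟩ := List.cons_eq_cons.mp h2
    exact ⟨v :: p₂, [], by simp⟩
  · -- b occurs after a
    have hbs' : b ∈ s := by
      rcases List.mem_cons.mp hbs with h | h
      · exact absurd h.symm hab'
      · exact h
    obtain ⟨q, r, rfl⟩ := List.append_of_mem hbs'
    rcases eq_or_ne q [] with rfl | hqne
    · exact ⟨p, r ++ [v], by simp⟩
    · exfalso
      -- shorter dicycle b :: (r ++ (p ++ [a]))
      have c1 : List.Chain' A ((b :: r) ++ [v]) :=
        hch'.infix ⟨p ++ a :: q, [], by simp⟩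
      have c2 : List.Chain' A (p ++ [a]) :=
        hch'.infix ⟨[], q ++ b :: r ++ [v], by simp⟩
      have c1s := List.isChain_append.mp c1
      have c3 : List.Chain' A ((b :: r) ++ (p ++ [a])) := by
        refine List.isChain_append.mpr ⟨c1s.1, c2, ?_⟩
        intro x hx y hy
        have hy' : y = v := by rw [hv'] at hy; exact (by simpa using hy : v = y).symm
        rw [hy']
        exact c1s.2.2 x hx v (by simp)
      have c4 : List.Chain' A (((b :: r) ++ (p ++ [a])) ++ [b]) := by
        refine List.isChain_append.mpr ⟨c3, List.isChain_singleton _, ?_⟩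
        intro x hx y hy
        have hx' : x = a := by
          rw [show (b :: r) ++ (p ++ [a]) = ((b :: r) ++ p) ++ [a] by simp,
            List.getLast?_concat] at hx
          exact (by simpa using hx : a = x).symm
        have hy' : y = b := (by simpa using hy : b = y).symm
        rw [hx', hy']; exact hab
      have hsub : List.Sublist ((p ++ [a]) ++ (b :: r)) ((p ++ [a]) ++ (q ++ (b :: r))) :=
        (List.Sublist.refl (p ++ [a])).append (List.sublist_append_right q (b :: r))
      have nodup1 : ((p ++ [a]) ++ (b :: r)).Nodup :=
        List.Nodup.sublist hsub (by simpa using hnd)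
      have nodupm : (b :: (r ++ (p ++ [a]))).Nodup := by
        have := List.perm_append_comm.nodup nodup1
        simpa using this
      have hdm : IsDicycle A (b :: (r ++ (p ++ [a]))) := by
        refine ⟨nodupm, chain_of_chain' ?_⟩
        simpa [List.append_assoc] using c4
      have hlen := hmin _ hdm
      simp only [List.length_append, List.length_cons, List.length_singleton, List.length_nil] at hlen
      have : q.length ≠ 0 := fun h => hqne (List.length_eq_zero_iff.mp h)
      omega

end DigirthAux

open DigirthAux in
/-- In a digraph without antiparallel arcs whose underlying graph is chordal
and which contains a dicycle, the shortest dicycle has length exactly `3`. -/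
theorem digirth_eq_three_of_chordal {V : Type*} (A : V → V → Prop)
    (hanti : ∀ x y, A x y → ¬ A y x)
    (hchordal : IsChordal (SimpleGraph.fromRel A))
    (hcyc : ∃ l, IsDicycle A l) :
    digirth A = 3 := by
  classical
  obtain ⟨l₀, hl₀⟩ := hcyc
  have hSne : {n | ∃ l, IsDicycle A l ∧ l.length = n}.Nonempty := ⟨l₀.length, l₀, hl₀, rfl⟩
  obtain ⟨l, hl, hlen⟩ := Nat.sInf_mem hSne
  have hmin : ∀ m, IsDicycle A m → l.length ≤ m.length := fun m hm =>
    hlen ▸ Nat.sInf_le ⟨m, hm, rfl⟩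
  suffices h3 : l.length = 3 by rw [digirth, ← hlen, h3]
  rcases l with _ | ⟨v, t⟩
  · exact hl.elim
  obtain ⟨hnd, hch⟩ := hl
  have noloop : ∀ x y, A x y → x ≠ y := fun x y h he => hanti x y h (he ▸ h)
  rcases t with _ | ⟨w, t'⟩
  · exact absurd (by simpa [List.Chain] using hch : A v v) (fun h => hanti v v h h)
  rcases t' with _ | ⟨x, t''⟩
  · rw [List.cons_append, List.nil_append] at hch; unfold List.Chain at hch; rw [List.chain_cons, List.chain_cons] at hch
    exact absurd hch.2.1 (hanti v w hch.1)
  set G := SimpleGraph.fromRel A with hG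
  have hchAdj : List.Chain G.Adj v ((w :: x :: t'') ++ [v]) :=
    List.IsChain.imp (fun a b hab => (SimpleGraph.fromRel_adj A a b).mpr ⟨noloop a b hab, Or.inl hab⟩) hch
  have hchAdj' : List.Chain G.Adj w ((x :: t'') ++ [v]) := (List.chain_cons.mp hchAdj).2
  have hadj_vw : G.Adj v w := (List.chain_cons.mp hchAdj).1
  have hvt : v ∉ w :: x :: t'' := (List.nodup_cons.mp hnd).1
  have hndt : (w :: x :: t'').Nodup := (List.nodup_cons.mp hnd).2
  have hWc : (mkWalk G (w :: x :: t'') v v hchAdj).IsCycle := by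
    rw [show mkWalk G (w :: x :: t'') v v hchAdj
        = SimpleGraph.Walk.cons hadj_vw (mkWalk G (x :: t'') w v hchAdj') from rfl]
    rw [SimpleGraph.Walk.cons_isCycle_iff]
    constructor
    · rw [SimpleGraph.Walk.isPath_def, support_mkWalk]
      have heq : (w :: x :: t'') ++ [v] = w :: ((x :: t'') ++ [v]) := by simp
      rw [← heq, List.nodup_append]
      exact ⟨hndt, List.nodup_singleton v, by simpa [List.disjoint_right] using fun a (ha : a ∈ w :: x :: t'') (h : a = v) => hvt (h ▸ ha)⟩
    · intro hmem
      obtain ⟨x', y', hxy, hinf⟩ := infix_of_mem_edges G (x :: t'') w v hchAdj' _ hmem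
      rw [Sym2.eq_iff] at hxy
      rcases hxy with ⟨rfl, rfl⟩ | ⟨rfl, rfl⟩
      · exact not_infix_head (w :: x :: t'') v w hvt (by simpa using hinf)
      · obtain ⟨t3, ht3⟩ := getLast_of_infix (w :: x :: t'') v w hvt (by simpa using hinf)
        rcases t3 with _ | ⟨c, t4⟩
        · simp at ht3
        · rw [List.cons_append] at ht3
          obtain ⟨-, ht4⟩ := List.cons_eq_cons.mp ht3
          have : w ∈ x :: t'' := by rw [ht4]; simp
          exact (List.nodup_cons.mp hndt).1 this
  have memlist : ∀ z, z ∈ (mkWalk G (w :: x :: t'') v v hchAdj).support →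
      z ∈ v :: w :: x :: t'' := by
    intro z hz
    rw [support_mkWalk] at hz
    simp only [List.mem_cons, List.mem_append, List.mem_singleton] at hz
    simp only [List.mem_cons]
    tauto
  have hind : ∀ a ∈ (mkWalk G (w :: x :: t'') v v hchAdj).support,
      ∀ b ∈ (mkWalk G (w :: x :: t'') v v hchAdj).support,
      G.Adj a b → s(a, b) ∈ (mkWalk G (w :: x :: t'') v v hchAdj).edges := by
    intro a haW b hbW hGab
    obtain ⟨hne, hor⟩ := (SimpleGraph.fromRel_adj A a b).mp (hG ▸ hGab)
    rcases hor with h | h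
    · have hk := key hanti ⟨hnd, hch⟩ hmin (memlist a haW) (memlist b hbW) h
      exact mem_edges_of_infix G _ v v hchAdj a b (by simpa using hk)
    · have hk := key hanti ⟨hnd, hch⟩ hmin (memlist b hbW) (memlist a haW) h
      have h2 := mem_edges_of_infix G _ v v hchAdj b a (by simpa using hk)
      rw [Sym2.eq_swap]
      exact h2
  have hlen3 := hchordal v (mkWalk G (w :: x :: t'') v v hchAdj) hWc hind
  rw [length_mkWalk] at hlen3
  simp only [List.length_cons] at hlen3 ⊢
  omega
end

section
/- Suppose a digraph G is the union of two subdigraphs G1 and G2 with V(G1) ∩ V(G2) = {a,b,c}, where a,b,c span a ditriangle in G contained in both G1 and G2 (arcs ab, bc, ca). If G1 has a packing {T1,T2,T3} of three disjoint dicycle-transversals with ab ∈ T1, bc ∈ T2, ca ∈ T3, and G2 has a packing {T1',T2',T3'} with ab ∈ T1', bc ∈ T2', ca ∈ T3', then {T1 ∪ T1', T2 ∪ T2', T3 ∪ T3'} is a packing of three disjoint dicycle-transversals of G. -/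
section AuxPackingGlue

variable {V : Type*}

lemma isDicycle_cons {A : V → V → Prop} {v : V} {l : List V} :
    IsDicycle A (v :: l) ↔ (v :: l).Nodup ∧ List.Chain A v (l ++ [v]) := Iff.rfl

lemma cycleArcs_cons (v : V) (l : List V) :
    cycleArcs (v :: l) = List.zip (v :: l) (l ++ [v]) := rfl

lemma sideChain {A1 A2 : V → V → Prop} {S1 S2 : Set V}
    (hsupp1 : ∀ x y, A1 x y → x ∈ S1 ∧ y ∈ S1)
    (hsupp2 : ∀ x y, A2 x y → x ∈ S2 ∧ y ∈ S2) :
    ∀ (m : List V) (u w : V), (∀ v ∈ m, ¬(v ∈ S1 ∧ v ∈ S2)) →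
    List.Chain (fun x y => A1 x y ∨ A2 x y) u (m ++ [w]) →
    List.Chain A1 u (m ++ [w]) ∨ List.Chain A2 u (m ++ [w]) := by
  intro m
  induction m with
  | nil =>
    intro u w _ hch
    simp only [List.Chain, List.nil_append, List.chain_cons, List.IsChain.singleton, and_true] at hch ⊢
    exact hch
  | cons v m' ih =>
    intro u w hm hch
    simp only [List.Chain, List.cons_append, List.chain_cons] at hch ⊢
    obtain ⟨huv, hch⟩ := hch
    have hvm : ¬(v ∈ S1 ∧ v ∈ S2) := hm v (List.mem_cons_self (a := v) (l := m'))
    have := ih v w (fun x hx => hm x (List.mem_cons_of_mem _ hx)) hch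
    rcases this with h1 | h1
    · -- first arc of h1 is A1 from v
      have hv1 : v ∈ S1 := by
        rcases hz : m' ++ [w] with _ | ⟨z, zs⟩
        · exact absurd hz (by simp)
        · rw [hz, List.Chain, List.chain_cons] at h1
          exact (hsupp1 v z h1.1).1
      have hv2 : v ∉ S2 := fun h => hvm ⟨hv1, h⟩
      have : A1 u v := by
        rcases huv with h | h
        · exact h
        · exact absurd (hsupp2 u v h).2 hv2
      exact Or.inl ⟨this, h1⟩
    · have hv2 : v ∈ S2 := by
        rcases hz : m' ++ [w] with _ | ⟨z, zs⟩
        · exact absurd hz (by simp)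
        · rw [hz, List.Chain, List.chain_cons] at h1
          exact (hsupp2 v z h1.1).1
      have hv1 : v ∉ S1 := fun h => hvm ⟨h, hv2⟩
      have : A2 u v := by
        rcases huv with h | h
        · exact absurd (hsupp1 u v h).2 hv1
        · exact h
      exact Or.inr ⟨this, h1⟩

lemma rot1 {A : V → V → Prop} {v : V} {m : List V} (h : IsDicycle A (v :: m)) (hm : m ≠ []) :
    IsDicycle A (m ++ [v]) ∧ ∀ e ∈ cycleArcs (m ++ [v]), e ∈ cycleArcs (v :: m) := by
  obtain ⟨w, t, rfl⟩ := List.exists_cons_of_ne_nil hm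
  obtain ⟨hnd, hch⟩ := h
  rw [List.Chain, List.cons_append, List.chain_cons] at hch
  obtain ⟨hvw, hch⟩ := hch
  constructor
  · constructor
    · exact ((List.perm_append_singleton v (w :: t)).nodup_iff).mpr hnd
    · show List.Chain A w ((t ++ [v]) ++ [w])
      rw [List.append_assoc]
      rw [show [v] ++ [w] = v :: [w] from rfl, List.Chain, List.isChain_cons_split]
      exact ⟨hch, List.chain_cons.mpr ⟨hvw, List.Chain.nil⟩⟩
  · intro e he
    have hlen : (w :: t).length = (t ++ [v]).length := by simp
    have harc : cycleArcs ((w :: t) ++ [v]) =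
        List.zip (w :: t) (t ++ [v]) ++ [(v, w)] := by
      show List.zip ((w :: t) ++ [v]) ((t ++ [v]) ++ [w]) = _
      rw [List.zip_append hlen]
      rfl
    have harc2 : cycleArcs (v :: w :: t) = (v, w) :: List.zip (w :: t) (t ++ [v]) := rfl
    rw [harc] at he
    rw [harc2]
    rcases List.mem_append.mp he with h | h
    · exact List.mem_cons_of_mem _ h
    · simp at h; simp [h]

lemma rotate_decomp {A : V → V → Prop} :
    ∀ (s : List V) (x : V) (t : List V), IsDicycle A (s ++ x :: t) →
    IsDicycle A (x :: (t ++ s)) ∧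
      ∀ e ∈ cycleArcs (x :: (t ++ s)), e ∈ cycleArcs (s ++ x :: t) := by
  intro s
  induction s with
  | nil =>
    intro x t h
    rw [List.append_nil]
    exact ⟨h, fun e he => he⟩
  | cons v s' ih =>
    intro x t h
    have hne : s' ++ x :: t ≠ [] := by simp
    have h1 := rot1 (v := v) (m := s' ++ x :: t) h hne
    rw [List.append_assoc] at h1
    have h2 := ih x (t ++ [v]) h1.1
    rw [List.append_assoc] at h2
    simp only [List.singleton_append] at h2
    refine ⟨h2.1, fun e he => ?_⟩
    exact h1.2 e (h2.2 e he)

lemma splitAtFirst (P : V → Prop) :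
    ∀ (l : List V), (∃ v ∈ l, P v) →
    ∃ m y r, l = m ++ y :: r ∧ P y ∧ ∀ v ∈ m, ¬ P v := by
  intro l
  induction l with
  | nil => rintro ⟨v, hv, _⟩; simp at hv
  | cons v l' ih =>
    intro h
    by_cases hPv : P v
    · exact ⟨[], v, l', rfl, hPv, by simp⟩
    · obtain ⟨w, hw, hPw⟩ := h
      rcases List.mem_cons.mp hw with rfl | hw'
      · exact absurd hPw hPv
      · obtain ⟨m, y, r, rfl, hPy, hm⟩ := ih ⟨w, hw', hPw⟩
        exact ⟨v :: m, y, r, rfl, hPy, by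
          intro u hu
          rcases List.mem_cons.mp hu with rfl | hu'
          · exact hPv
          · exact hm u hu'⟩

lemma cycleArcs_decomp (u w : V) (m s : List V) :
    cycleArcs (u :: (m ++ w :: s)) =
      List.zip (u :: m) (m ++ [w]) ++ List.zip (w :: s) (s ++ [u]) := by
  show List.zip (u :: (m ++ w :: s)) ((m ++ w :: s) ++ [u]) = _
  rw [show u :: (m ++ w :: s) = (u :: m) ++ (w :: s) by simp,
      show (m ++ w :: s) ++ [u] = (m ++ [w]) ++ (s ++ [u]) by simp,
      List.zip_append (by simp)]

lemma hitSide {A : V → V → Prop} {T : Set (V × V)} (hT : IsTransversal A T)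
    (u w : V) (m cl : List V)
    (hnd1 : (u :: (m ++ [w])).Nodup) (hclnd : cl.Nodup)
    (hclm : ∀ v ∈ cl, v ∉ u :: (m ++ [w]))
    (hpath : List.Chain A u (m ++ [w])) (hcl : List.Chain A w (cl ++ [u]))
    (hclT : ∀ e ∈ List.zip (w :: cl) (cl ++ [u]), e ∉ T) :
    ∃ e ∈ List.zip (u :: m) (m ++ [w]), e ∈ T := by
  have hndc : (u :: (m ++ w :: cl)).Nodup := by
    have : u :: (m ++ w :: cl) = (u :: (m ++ [w])) ++ cl := by simp
    rw [this]
    exact hnd1.append hclnd (fun a ha hacl => hclm a hacl ha)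
  have hchc : List.Chain A u ((m ++ w :: cl) ++ [u]) := by
    rw [show (m ++ w :: cl) ++ [u] = m ++ w :: (cl ++ [u]) by simp, List.Chain, List.isChain_cons_split]
    exact ⟨hpath, hcl⟩
  have hdi : IsDicycle A (u :: (m ++ w :: cl)) := ⟨hndc, hchc⟩
  obtain ⟨e, hec, heT⟩ := hT.2 _ hdi
  rw [cycleArcs_decomp] at hec
  rcases List.mem_append.mp hec with h | h
  · exact ⟨e, h, heT⟩
  · exact absurd heT (hclT e h)

lemma hitPrefix {A1 A2 : V → V → Prop} {S1 S2 : Set V}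
    (hsupp1 : ∀ x y, A1 x y → x ∈ S1 ∧ y ∈ S1)
    (hsupp2 : ∀ x y, A2 x y → x ∈ S2 ∧ y ∈ S2)
    {T T' : Set (V × V)} (hT : IsTransversal A1 T) (hT' : IsTransversal A2 T')
    (u w : V) (m r cl : List V)
    (hcyc : IsDicycle (fun x y => A1 x y ∨ A2 x y) (u :: (m ++ w :: r)))
    (hm : ∀ v ∈ m, ¬(v ∈ S1 ∧ v ∈ S2))
    (hclm : ∀ v ∈ cl, v ∉ u :: (m ++ [w])) (hclnd : cl.Nodup)
    (hch1 : List.Chain A1 w (cl ++ [u])) (hch2 : List.Chain A2 w (cl ++ [u]))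
    (hclT : ∀ e ∈ List.zip (w :: cl) (cl ++ [u]), e ∉ T ∧ e ∉ T') :
    ∃ e ∈ cycleArcs (u :: (m ++ w :: r)), e ∈ T ∪ T' := by
  obtain ⟨hnd, hch⟩ := hcyc
  rw [show (m ++ w :: r) ++ [u] = m ++ w :: (r ++ [u]) by simp, List.Chain, List.isChain_cons_split] at hch
  obtain ⟨hpath, _⟩ := hch
  have hnd1 : (u :: (m ++ [w])).Nodup := by
    refine List.Nodup.sublist ?_ hnd
    exact (((List.nil_sublist r).cons₂ w).append_left m).cons₂ u
  rcases sideChain hsupp1 hsupp2 m u w hm hpath with hs | hs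
  · obtain ⟨e, he, heT⟩ := hitSide hT u w m cl hnd1 hclnd hclm hs hch1
      (fun e he => (hclT e he).1)
    exact ⟨e, by rw [cycleArcs_decomp]; exact List.mem_append_left _ he, Or.inl heT⟩
  · obtain ⟨e, he, heT⟩ := hitSide hT' u w m cl hnd1 hclnd hclm hs hch2
      (fun e he => (hclT e he).2)
    exact ⟨e, by rw [cycleArcs_decomp]; exact List.mem_append_left _ he, Or.inr heT⟩

lemma nodup_skeleton {x y z : V} {m1 m2 r2 : List V}
    (h : (x :: (m1 ++ y :: (m2 ++ z :: r2))).Nodup) :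
    x ∉ r2 ∧ y ∉ r2 ∧ z ∉ r2 ∧ x ≠ y ∧ x ≠ z ∧ y ≠ z := by
  have hsub : List.Sublist (x :: y :: z :: r2) (x :: (m1 ++ y :: (m2 ++ z :: r2))) := by
    refine List.Sublist.cons₂ x ?_
    refine List.Sublist.trans ?_ (List.sublist_append_right m1 _)
    refine List.Sublist.cons₂ y ?_
    exact List.sublist_append_right m2 _
  have hnd := List.Nodup.sublist hsub h
  simp only [List.nodup_cons, List.mem_cons, not_or] at hnd
  exact ⟨hnd.1.2.2, hnd.2.1.2, hnd.2.2.1, hnd.1.1, hnd.1.2.1, hnd.2.1.1⟩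

lemma closeTwo {A1 A2 : V → V → Prop} {S1 S2 : Set V}
    (hsupp1 : ∀ x y, A1 x y → x ∈ S1 ∧ y ∈ S1)
    (hsupp2 : ∀ x y, A2 x y → x ∈ S2 ∧ y ∈ S2)
    {T T' : Set (V × V)} (hT : IsTransversal A1 T) (hT' : IsTransversal A2 T')
    {u w t : V}
    (h1wt : A1 w t) (h1tu : A1 t u) (h2wt : A2 w t) (h2tu : A2 t u)
    (hnwt : (w, t) ∉ T) (hntu : (t, u) ∉ T) (hnwt' : (w, t) ∉ T') (hntu' : (t, u) ∉ T')
    (htu : t ≠ u) (htw : t ≠ w)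
    (m r : List V) (hm : ∀ v ∈ m, ¬(v ∈ S1 ∧ v ∈ S2)) (htm : t ∉ m)
    (hc : IsDicycle (fun x y => A1 x y ∨ A2 x y) (u :: (m ++ w :: r))) :
    ∃ e ∈ cycleArcs (u :: (m ++ w :: r)), e ∈ T ∪ T' := by
  refine hitPrefix hsupp1 hsupp2 hT hT' u w m r [t] hc hm ?_ (by simp) ?_ ?_ ?_
  · intro v hv
    simp only [List.mem_singleton] at hv
    subst hv
    simp only [List.mem_cons, List.mem_append, List.mem_singleton, not_or]
    refine ⟨htu, fun h => htm h, htw, ?_⟩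
    simp
  · exact List.chain_cons.mpr ⟨h1wt, List.chain_cons.mpr ⟨h1tu, List.Chain.nil⟩⟩
  · exact List.chain_cons.mpr ⟨h2wt, List.chain_cons.mpr ⟨h2tu, List.Chain.nil⟩⟩
  · intro e he
    have : List.zip (w :: [t]) ([t] ++ [u]) = [(w, t), (t, u)] := rfl
    rw [this] at he
    simp only [List.mem_cons, List.mem_singleton] at he
    rcases he with rfl | rfl | h
    · exact ⟨hnwt, hnwt'⟩
    · exact ⟨hntu, hntu'⟩
    · exact absurd h List.not_mem_nil

lemma closeOne {A1 A2 : V → V → Prop} {S1 S2 : Set V}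
    (hsupp1 : ∀ x y, A1 x y → x ∈ S1 ∧ y ∈ S1)
    (hsupp2 : ∀ x y, A2 x y → x ∈ S2 ∧ y ∈ S2)
    {T T' : Set (V × V)} (hT : IsTransversal A1 T) (hT' : IsTransversal A2 T')
    {u w : V}
    (h1wu : A1 w u) (h2wu : A2 w u) (hnwu : (w, u) ∉ T) (hnwu' : (w, u) ∉ T')
    (m r : List V) (hm : ∀ v ∈ m, ¬(v ∈ S1 ∧ v ∈ S2))
    (hc : IsDicycle (fun x y => A1 x y ∨ A2 x y) (u :: (m ++ w :: r))) :
    ∃ e ∈ cycleArcs (u :: (m ++ w :: r)), e ∈ T ∪ T' := by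
  refine hitPrefix hsupp1 hsupp2 hT hT' u w m r [] hc hm (by simp) (by simp) ?_ ?_ ?_
  · exact List.chain_cons.mpr ⟨h1wu, List.Chain.nil⟩
  · exact List.chain_cons.mpr ⟨h2wu, List.Chain.nil⟩
  · intro e he
    have : List.zip (w :: ([] : List V)) (([] : List V) ++ [u]) = [(w, u)] := rfl
    rw [this] at he
    simp only [List.mem_singleton] at he
    subst he
    exact ⟨hnwu, hnwu'⟩

lemma noLoop {A : V → V → Prop} {T U : Set (V × V)}
    (hT : IsTransversal A T) (hU : IsTransversal A U) (hd : Disjoint T U)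
    {x : V} (h : A x x) : False := by
  have hc : IsDicycle A [x] :=
    ⟨List.nodup_singleton x, List.chain_cons.mpr ⟨h, List.Chain.nil⟩⟩
  obtain ⟨e, he, heT⟩ := hT.2 _ hc
  obtain ⟨f, hf, hfU⟩ := hU.2 _ hc
  have harc : cycleArcs [x] = [(x, x)] := rfl
  rw [harc] at he hf
  simp only [List.mem_singleton] at he hf
  subst he; subst hf
  exact Set.disjoint_left.mp hd heT hfU

lemma no2cycle {A : V → V → Prop} {T U : Set (V × V)}
    (hT : IsTransversal A T) (hU : IsTransversal A U) (hd : Disjoint T U)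
    {x y : V} (hxy : x ≠ y) (h1 : A x y) (h2 : A y x)
    (hxT : (x, y) ∉ T) (hxU : (x, y) ∉ U) : False := by
  have hc : IsDicycle A [x, y] := by
    refine ⟨by simp [hxy], ?_⟩
    exact List.chain_cons.mpr ⟨h1, List.chain_cons.mpr ⟨h2, List.Chain.nil⟩⟩
  obtain ⟨e, he, heT⟩ := hT.2 _ hc
  obtain ⟨f, hf, hfU⟩ := hU.2 _ hc
  have harc : cycleArcs [x, y] = [(x, y), (y, x)] := rfl
  rw [harc] at he hf
  simp only [List.mem_cons, List.mem_singleton] at he hf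
  rcases he with rfl | rfl | he
  · exact hxT heT
  · rcases hf with rfl | rfl | hf
    · exact hxU hfU
    · exact Set.disjoint_left.mp hd heT hfU
    · exact absurd hf List.not_mem_nil
  · exact absurd he List.not_mem_nil

lemma master
    {A1 A2 : V → V → Prop} {S1 S2 : Set V} {a b c : V}
    (hsupp1 : ∀ x y, A1 x y → x ∈ S1 ∧ y ∈ S1)
    (hsupp2 : ∀ x y, A2 x y → x ∈ S2 ∧ y ∈ S2)
    (hinter : S1 ∩ S2 = {a, b, c})
    (hab : a ≠ b) (hbc : b ≠ c) (hac : a ≠ c)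
    (htri1 : A1 a b ∧ A1 b c ∧ A1 c a) (htri2 : A2 a b ∧ A2 b c ∧ A2 c a)
    {T1 T2 T3 T1' T2' T3' : Set (V × V)}
    (hT1 : IsTransversal A1 T1) (hT2 : IsTransversal A1 T2) (hT3 : IsTransversal A1 T3)
    (hT1' : IsTransversal A2 T1') (hT2' : IsTransversal A2 T2') (hT3' : IsTransversal A2 T3')
    (hd12 : Disjoint T1 T2) (hd13 : Disjoint T1 T3) (hd23 : Disjoint T2 T3)
    (hd12' : Disjoint T1' T2') (hd13' : Disjoint T1' T3') (hd23' : Disjoint T2' T3')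
    (hab1 : (a, b) ∈ T1) (hbc1 : (b, c) ∈ T2) (hca1 : (c, a) ∈ T3)
    (hab2 : (a, b) ∈ T1') (hbc2 : (b, c) ∈ T2') (hca2 : (c, a) ∈ T3') :
    IsTransversal (fun x y => A1 x y ∨ A2 x y) (T1 ∪ T1') := by
  classical
  constructor
  · rintro e (he | he)
    · exact Or.inl (hT1.1 e he)
    · exact Or.inr (hT1'.1 e he)
  intro l hl
  obtain ⟨P, hPdef⟩ : ∃ P : V → Prop, ∀ v, P v ↔ (v = a ∨ v = b ∨ v = c) :=
    ⟨_, fun v => Iff.rfl⟩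
  have hmemX : ∀ v : V, (v ∈ S1 ∧ v ∈ S2) ↔ P v := by
    intro v
    rw [hPdef v, ← Set.mem_inter_iff, hinter]
    simp
  -- non-membership facts for T1 and T1'
  have hbcT1 : (b, c) ∉ T1 := fun h => Set.disjoint_left.mp hd12 h hbc1
  have hcaT1 : (c, a) ∉ T1 := fun h => Set.disjoint_left.mp hd13 h hca1
  have hbcT1' : (b, c) ∉ T1' := fun h => Set.disjoint_left.mp hd12' h hbc2
  have hcaT1' : (c, a) ∉ T1' := fun h => Set.disjoint_left.mp hd13' h hca2
  have hPa : P a := (hPdef a).mpr (Or.inl rfl)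
  have hPb : P b := (hPdef b).mpr (Or.inr (Or.inl rfl))
  have hPc : P c := (hPdef c).mpr (Or.inr (Or.inr rfl))
  -- closing helper lemmas
  have cAB : ∀ (m r : List V), (∀ v ∈ m, ¬ P v) →
      IsDicycle (fun x y => A1 x y ∨ A2 x y) (a :: (m ++ b :: r)) →
      ∃ e ∈ cycleArcs (a :: (m ++ b :: r)), e ∈ T1 ∪ T1' := by
    intro m r hmX hc
    exact closeTwo hsupp1 hsupp2 hT1 hT1' htri1.2.1 htri1.2.2 htri2.2.1 htri2.2.2
      hbcT1 hcaT1 hbcT1' hcaT1' (Ne.symm hac) (Ne.symm hbc) m r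
      (fun v hv hmem => hmX v hv ((hmemX v).mp hmem))
      (fun h => hmX c h hPc) hc
  have cCB : ∀ (m r : List V), (∀ v ∈ m, ¬ P v) →
      IsDicycle (fun x y => A1 x y ∨ A2 x y) (c :: (m ++ b :: r)) →
      ∃ e ∈ cycleArcs (c :: (m ++ b :: r)), e ∈ T1 ∪ T1' := by
    intro m r hmX hc
    exact closeOne hsupp1 hsupp2 hT1 hT1' htri1.2.1 htri2.2.1 hbcT1 hbcT1' m r
      (fun v hv hmem => hmX v hv ((hmemX v).mp hmem)) hc
  have cAC : ∀ (m r : List V), (∀ v ∈ m, ¬ P v) →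
      IsDicycle (fun x y => A1 x y ∨ A2 x y) (a :: (m ++ c :: r)) →
      ∃ e ∈ cycleArcs (a :: (m ++ c :: r)), e ∈ T1 ∪ T1' := by
    intro m r hmX hc
    exact closeOne hsupp1 hsupp2 hT1 hT1' htri1.2.2 htri2.2.2 hcaT1 hcaT1' m r
      (fun v hv hmem => hmX v hv ((hmemX v).mp hmem)) hc
  by_cases h2 : ∃ x ∈ l, ∃ y ∈ l, P x ∧ P y ∧ x ≠ y
  · -- main case: at least two distinct cut vertices on the cycle
    obtain ⟨x, hxl, y, hyl, hxX, hyX, hxy⟩ := h2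
    obtain ⟨s, t, rfl⟩ := List.append_of_mem hxl
    obtain ⟨hdl', harc'⟩ := rotate_decomp s x t hl
    have hyts : y ∈ t ++ s := by
      have hy : y ∈ s ++ x :: t := hyl
      simp only [List.mem_append, List.mem_cons] at hy ⊢
      rcases hy with h | h | h
      · exact Or.inr h
      · exact absurd h.symm hxy
      · exact Or.inl h
    obtain ⟨m1, y1, r1, heq, hy1X, hm1⟩ := splitAtFirst P (t ++ s) ⟨y, hyts, hyX⟩
    rw [heq] at hdl' harc'
    have hndl' := hdl'.1
    have hy1x : y1 ≠ x := by
      rintro rfl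
      exact (List.nodup_cons.mp hndl').1 (by simp)
    suffices h : ∃ e ∈ cycleArcs (x :: (m1 ++ y1 :: r1)), e ∈ T1 ∪ T1' by
      obtain ⟨e, he, heT⟩ := h
      exact ⟨e, harc' e he, heT⟩
    rcases (hPdef x).mp hxX with rfl | rfl | rfl <;>
      rcases (hPdef y1).mp hy1X with rfl | rfl | rfl
    · exact absurd rfl hy1x
    · -- (a, b) : direct segment
      exact cAB m1 r1 hm1 hdl'
    · -- (a, c) : direct segment
      exact cAC m1 r1 hm1 hdl'
    · -- (b, a)
      by_cases hr1 : ∃ v ∈ r1, P v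
      · obtain ⟨m2, z, r2, heq2, hzX, hm2⟩ := splitAtFirst P r1 hr1
        subst heq2
        have hsk := nodup_skeleton hndl'
        rcases (hPdef z).mp hzX with rfl | rfl | rfl
        · exact absurd rfl hsk.2.2.2.2.2
        · exact absurd rfl hsk.2.2.2.2.1
        · -- z = c : rotate to y1 = a and use segment a→c
          obtain ⟨hc2, harc2⟩ := rotate_decomp (x :: m1) y1 (m2 ++ z :: r2) hdl'
          have hre : (m2 ++ z :: r2) ++ x :: m1 = m2 ++ z :: (r2 ++ x :: m1) := by simp
          rw [hre] at hc2 harc2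
          obtain ⟨e, he, heT⟩ := cAC m2 (r2 ++ x :: m1) hm2 hc2
          exact ⟨e, harc2 e he, heT⟩
      · -- rotate to y1 = a, segment a→b
        obtain ⟨hc2, harc2⟩ := rotate_decomp (x :: m1) y1 r1 hdl'
        obtain ⟨e, he, heT⟩ := cAB r1 m1 (fun v hv hvX => hr1 ⟨v, hv, hvX⟩) hc2
        exact ⟨e, harc2 e he, heT⟩
    · exact absurd rfl hy1x
    · -- (b, c)
      by_cases hr1 : ∃ v ∈ r1, P v
      · obtain ⟨m2, z, r2, heq2, hzX, hm2⟩ := splitAtFirst P r1 hr1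
        subst heq2
        have hsk := nodup_skeleton hndl'
        rcases (hPdef z).mp hzX with rfl | rfl | rfl
        · -- z = a : rotate to z and use segment a→b
          have hr2free : ∀ v ∈ r2, ¬ P v := by
            intro v hv hvX
            rcases (hPdef v).mp hvX with rfl | rfl | rfl
            · exact hsk.2.2.1 hv
            · exact hsk.1 hv
            · exact hsk.2.1 hv
          have hsh : x :: (m1 ++ y1 :: (m2 ++ z :: r2)) = (x :: m1 ++ y1 :: m2) ++ z :: r2 := by
            simp
          rw [hsh] at hdl'
          obtain ⟨hc2, harc2⟩ := rotate_decomp (x :: m1 ++ y1 :: m2) z r2 hdl'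
          obtain ⟨e, he, heT⟩ := cAB r2 (m1 ++ y1 :: m2) hr2free hc2
          refine ⟨e, ?_, heT⟩
          rw [hsh]
          exact harc2 e he
        · exact absurd rfl hsk.2.2.2.2.1
        · exact absurd rfl hsk.2.2.2.2.2
      · -- rotate to y1 = c, segment c→b
        obtain ⟨hc2, harc2⟩ := rotate_decomp (x :: m1) y1 r1 hdl'
        obtain ⟨e, he, heT⟩ := cCB r1 m1 (fun v hv hvX => hr1 ⟨v, hv, hvX⟩) hc2
        exact ⟨e, harc2 e he, heT⟩
    · -- (c, a)
      by_cases hr1 : ∃ v ∈ r1, P v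
      · obtain ⟨m2, z, r2, heq2, hzX, hm2⟩ := splitAtFirst P r1 hr1
        subst heq2
        have hsk := nodup_skeleton hndl'
        rcases (hPdef z).mp hzX with rfl | rfl | rfl
        · exact absurd rfl hsk.2.2.2.2.2
        · -- z = b : rotate to y1 = a and use segment a→b
          obtain ⟨hc2, harc2⟩ := rotate_decomp (x :: m1) y1 (m2 ++ z :: r2) hdl'
          have hre : (m2 ++ z :: r2) ++ x :: m1 = m2 ++ z :: (r2 ++ x :: m1) := by simp
          rw [hre] at hc2 harc2
          obtain ⟨e, he, heT⟩ := cAB m2 (r2 ++ x :: m1) hm2 hc2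
          exact ⟨e, harc2 e he, heT⟩
        · exact absurd rfl hsk.2.2.2.2.1
      · -- rotate to y1 = a, segment a→c
        obtain ⟨hc2, harc2⟩ := rotate_decomp (x :: m1) y1 r1 hdl'
        obtain ⟨e, he, heT⟩ := cAC r1 m1 (fun v hv hvX => hr1 ⟨v, hv, hvX⟩) hc2
        exact ⟨e, harc2 e he, heT⟩
    · -- (c, b) : direct segment
      exact cCB m1 r1 hm1 hdl'
    · exact absurd rfl hy1x
  · -- the cycle meets at most one cut vertex: it lies in one side
    by_cases h1 : ∃ x ∈ l, P x
    · obtain ⟨x, hxl, hxX⟩ := h1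
      obtain ⟨s, t, rfl⟩ := List.append_of_mem hxl
      obtain ⟨hdl', harc'⟩ := rotate_decomp s x t hl
      have hnd' := hdl'.1
      have hfree : ∀ v ∈ t ++ s, ¬(v ∈ S1 ∧ v ∈ S2) := by
        intro v hv hmem
        have hvX := (hmemX v).mp hmem
        have hvl : v ∈ s ++ x :: t := by
          simp only [List.mem_append, List.mem_cons] at hv ⊢
          tauto
        have hvx : v ≠ x := by
          rintro rfl
          exact (List.nodup_cons.mp hnd').1 hv
        exact h2 ⟨x, hxl, v, hvl, hxX, hvX, hvx.symm⟩
      rcases sideChain hsupp1 hsupp2 (t ++ s) x x hfree hdl'.2 with h | h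
      · obtain ⟨e, he, heT⟩ := hT1.2 (x :: (t ++ s)) (isDicycle_cons.mpr ⟨hnd', h⟩)
        exact ⟨e, harc' e he, Or.inl heT⟩
      · obtain ⟨e, he, heT⟩ := hT1'.2 (x :: (t ++ s)) (isDicycle_cons.mpr ⟨hnd', h⟩)
        exact ⟨e, harc' e he, Or.inr heT⟩
    · cases l with
      | nil => exact False.elim hl
      | cons u t =>
        obtain ⟨hnd, hch⟩ := hl
        have hfree : ∀ v ∈ t, ¬(v ∈ S1 ∧ v ∈ S2) := by
          intro v hv hmem
          exact h1 ⟨v, List.mem_cons_of_mem u hv, (hmemX v).mp hmem⟩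
        rcases sideChain hsupp1 hsupp2 t u u hfree hch with h | h
        · obtain ⟨e, he, heT⟩ := hT1.2 (u :: t) (isDicycle_cons.mpr ⟨hnd, h⟩)
          exact ⟨e, he, Or.inl heT⟩
        · obtain ⟨e, he, heT⟩ := hT1'.2 (u :: t) (isDicycle_cons.mpr ⟨hnd, h⟩)
          exact ⟨e, he, Or.inr heT⟩

lemma sharedTri
    {A1 A2 : V → V → Prop} {S1 S2 : Set V} {a b c : V}
    (hsupp1 : ∀ x y, A1 x y → x ∈ S1 ∧ y ∈ S1)
    (hsupp2 : ∀ x y, A2 x y → x ∈ S2 ∧ y ∈ S2)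
    (hinter : S1 ∩ S2 = {a, b, c})
    (hab : a ≠ b) (hbc : b ≠ c) (hac : a ≠ c)
    (htri1 : A1 a b ∧ A1 b c ∧ A1 c a)
    {T1 T2 T3 : Set (V × V)}
    (hT1 : IsTransversal A1 T1) (hT2 : IsTransversal A1 T2) (hT3 : IsTransversal A1 T3)
    (hd12 : Disjoint T1 T2) (hd13 : Disjoint T1 T3) (hd23 : Disjoint T2 T3)
    (hab1 : (a, b) ∈ T1) (hbc1 : (b, c) ∈ T2) (hca1 : (c, a) ∈ T3)
    {x y : V} (h1 : A1 x y) (h2 : A2 x y) :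
    (x, y) = (a, b) ∨ (x, y) = (b, c) ∨ (x, y) = (c, a) := by
  have habT2 : (a, b) ∉ T2 := fun h => Set.disjoint_left.mp hd12 hab1 h
  have habT3 : (a, b) ∉ T3 := fun h => Set.disjoint_left.mp hd13 hab1 h
  have hbcT1 : (b, c) ∉ T1 := fun h => Set.disjoint_left.mp hd12 h hbc1
  have hbcT3 : (b, c) ∉ T3 := fun h => Set.disjoint_left.mp hd23 hbc1 h
  have hcaT1 : (c, a) ∉ T1 := fun h => Set.disjoint_left.mp hd13 h hca1
  have hcaT2 : (c, a) ∉ T2 := fun h => Set.disjoint_left.mp hd23 h hca1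
  have hx : x = a ∨ x = b ∨ x = c := by
    have := Set.mem_inter (hsupp1 x y h1).1 (hsupp2 x y h2).1
    rw [hinter] at this
    simpa using this
  have hy : y = a ∨ y = b ∨ y = c := by
    have := Set.mem_inter (hsupp1 x y h1).2 (hsupp2 x y h2).2
    rw [hinter] at this
    simpa using this
  rcases hx with hx | hx | hx <;> rcases hy with hy | hy | hy
  · rw [hx, hy] at h1; exact absurd h1 (fun h => noLoop hT1 hT2 hd12 h)
  · exact Or.inl (by rw [hx, hy])
  · rw [hx, hy] at h1
    exact absurd h1 (fun h => no2cycle hT1 hT2 hd12 (Ne.symm hac) htri1.2.2 h hcaT1 hcaT2)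
  · rw [hx, hy] at h1
    exact absurd h1 (fun h => no2cycle hT2 hT3 hd23 hab htri1.1 h habT2 habT3)
  · rw [hx, hy] at h1; exact absurd h1 (fun h => noLoop hT1 hT2 hd12 h)
  · exact Or.inr (Or.inl (by rw [hx, hy]))
  · exact Or.inr (Or.inr (by rw [hx, hy]))
  · rw [hx, hy] at h1
    exact absurd h1 (fun h => no2cycle hT1 hT3 hd13 hbc htri1.2.1 h hbcT1 hbcT3)
  · rw [hx, hy] at h1; exact absurd h1 (fun h => noLoop hT1 hT2 hd12 h)

lemma disj12
    {A1 A2 : V → V → Prop} {S1 S2 : Set V} {a b c : V}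
    (hsupp1 : ∀ x y, A1 x y → x ∈ S1 ∧ y ∈ S1)
    (hsupp2 : ∀ x y, A2 x y → x ∈ S2 ∧ y ∈ S2)
    (hinter : S1 ∩ S2 = {a, b, c})
    (hab : a ≠ b) (hbc : b ≠ c) (hac : a ≠ c)
    (htri1 : A1 a b ∧ A1 b c ∧ A1 c a)
    {T1 T2 T3 T1' T2' T3' : Set (V × V)}
    (hT1 : IsTransversal A1 T1) (hT2 : IsTransversal A1 T2) (hT3 : IsTransversal A1 T3)
    (hT1' : IsTransversal A2 T1') (hT2' : IsTransversal A2 T2') (hT3' : IsTransversal A2 T3')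
    (hd12 : Disjoint T1 T2) (hd13 : Disjoint T1 T3) (hd23 : Disjoint T2 T3)
    (hd12' : Disjoint T1' T2') (hd13' : Disjoint T1' T3') (hd23' : Disjoint T2' T3')
    (hab1 : (a, b) ∈ T1) (hbc1 : (b, c) ∈ T2) (hca1 : (c, a) ∈ T3)
    (hab2 : (a, b) ∈ T1') (hbc2 : (b, c) ∈ T2') (hca2 : (c, a) ∈ T3') :
    Disjoint (T1 ∪ T1') (T2 ∪ T2') := by
  rw [Set.disjoint_union_left]
  constructor <;> rw [Set.disjoint_union_right]
  · refine ⟨hd12, ?_⟩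
    rw [Set.disjoint_left]
    rintro ⟨p, q⟩ he1 he2
    rcases sharedTri hsupp1 hsupp2 hinter hab hbc hac htri1 hT1 hT2 hT3
      hd12 hd13 hd23 hab1 hbc1 hca1 (hT1.1 _ he1) (hT2'.1 _ he2) with h | h | h
    · rw [h] at he2; exact Set.disjoint_left.mp hd12' hab2 he2
    · rw [h] at he1; exact Set.disjoint_left.mp hd12 he1 hbc1
    · rw [h] at he1; exact Set.disjoint_left.mp hd13 he1 hca1
  · refine ⟨?_, hd12'⟩
    rw [Set.disjoint_left]
    rintro ⟨p, q⟩ he1 he2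
    rcases sharedTri hsupp1 hsupp2 hinter hab hbc hac htri1 hT1 hT2 hT3
      hd12 hd13 hd23 hab1 hbc1 hca1 (hT2.1 _ he2) (hT1'.1 _ he1) with h | h | h
    · rw [h] at he2; exact Set.disjoint_left.mp hd12 hab1 he2
    · rw [h] at he1; exact Set.disjoint_left.mp hd12' he1 hbc2
    · rw [h] at he2; exact Set.disjoint_left.mp hd23 he2 hca1


end AuxPackingGlue

/-- If `G = G₁ ∪ G₂` with `V(G₁) ∩ V(G₂) = {a, b, c}` spanning a ditriangle
`ab, bc, ca` contained in both parts, and each part has a packing of three disjoint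
transversals containing `ab`, `bc`, `ca` respectively, then the unions form a packing of
three disjoint transversals of `G`. -/
theorem packing_glue_along_ditriangle {V : Type*}
    (A1 A2 : V → V → Prop) (S1 S2 : Set V) (a b c : V)
    (hsupp1 : ∀ x y, A1 x y → x ∈ S1 ∧ y ∈ S1)
    (hsupp2 : ∀ x y, A2 x y → x ∈ S2 ∧ y ∈ S2)
    (hinter : S1 ∩ S2 = {a, b, c})
    (hab : a ≠ b) (hbc : b ≠ c) (hac : a ≠ c)
    (htri1 : A1 a b ∧ A1 b c ∧ A1 c a) (htri2 : A2 a b ∧ A2 b c ∧ A2 c a)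
    (T1 T2 T3 T1' T2' T3' : Set (V × V))
    (hT1 : IsTransversal A1 T1) (hT2 : IsTransversal A1 T2) (hT3 : IsTransversal A1 T3)
    (hT1' : IsTransversal A2 T1') (hT2' : IsTransversal A2 T2') (hT3' : IsTransversal A2 T3')
    (hd12 : Disjoint T1 T2) (hd13 : Disjoint T1 T3) (hd23 : Disjoint T2 T3)
    (hd12' : Disjoint T1' T2') (hd13' : Disjoint T1' T3') (hd23' : Disjoint T2' T3')
    (hab1 : (a, b) ∈ T1) (hbc1 : (b, c) ∈ T2) (hca1 : (c, a) ∈ T3)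
    (hab2 : (a, b) ∈ T1') (hbc2 : (b, c) ∈ T2') (hca2 : (c, a) ∈ T3') :
    IsTransversal (fun x y => A1 x y ∨ A2 x y) (T1 ∪ T1') ∧
    IsTransversal (fun x y => A1 x y ∨ A2 x y) (T2 ∪ T2') ∧
    IsTransversal (fun x y => A1 x y ∨ A2 x y) (T3 ∪ T3') ∧
    Disjoint (T1 ∪ T1') (T2 ∪ T2') ∧ Disjoint (T1 ∪ T1') (T3 ∪ T3') ∧
    Disjoint (T2 ∪ T2') (T3 ∪ T3') := by
  have hinter2 : S1 ∩ S2 = {b, c, a} := by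
    rw [hinter]; ext v; simp; tauto
  have hinter3 : S1 ∩ S2 = {c, a, b} := by
    rw [hinter]; ext v; simp; tauto
  have htri1b : A1 b c ∧ A1 c a ∧ A1 a b := ⟨htri1.2.1, htri1.2.2, htri1.1⟩
  have htri2b : A2 b c ∧ A2 c a ∧ A2 a b := ⟨htri2.2.1, htri2.2.2, htri2.1⟩
  have htri1c : A1 c a ∧ A1 a b ∧ A1 b c := ⟨htri1.2.2, htri1.1, htri1.2.1⟩
  have htri2c : A2 c a ∧ A2 a b ∧ A2 b c := ⟨htri2.2.2, htri2.1, htri2.2.1⟩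
  refine ⟨?_, ?_, ?_, ?_, ?_, ?_⟩
  · exact master hsupp1 hsupp2 hinter hab hbc hac htri1 htri2
      hT1 hT2 hT3 hT1' hT2' hT3' hd12 hd13 hd23 hd12' hd13' hd23'
      hab1 hbc1 hca1 hab2 hbc2 hca2
  · exact master hsupp1 hsupp2 hinter2 hbc (Ne.symm hac) (Ne.symm hab) htri1b htri2b
      hT2 hT3 hT1 hT2' hT3' hT1' hd23 hd12.symm hd13.symm hd23' hd12'.symm hd13'.symm
      hbc1 hca1 hab1 hbc2 hca2 hab2
  · exact master hsupp1 hsupp2 hinter3 (Ne.symm hac) hab (Ne.symm hbc) htri1c htri2c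
      hT3 hT1 hT2 hT3' hT1' hT2' hd13.symm hd23.symm hd12 hd13'.symm hd23'.symm hd12'
      hca1 hab1 hbc1 hca2 hab2 hbc2
  · exact disj12 hsupp1 hsupp2 hinter hab hbc hac htri1
      hT1 hT2 hT3 hT1' hT2' hT3' hd12 hd13 hd23 hd12' hd13' hd23'
      hab1 hbc1 hca1 hab2 hbc2 hca2
  · exact (disj12 hsupp1 hsupp2 hinter3 (Ne.symm hac) hab (Ne.symm hbc) htri1c
      hT3 hT1 hT2 hT3' hT1' hT2' hd13.symm hd23.symm hd12 hd13'.symm hd23'.symm hd12'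
      hca1 hab1 hbc1 hca2 hab2 hbc2).symm
  · exact disj12 hsupp1 hsupp2 hinter2 hbc (Ne.symm hac) (Ne.symm hab) htri1b
      hT2 hT3 hT1 hT2' hT3' hT1' hd23 hd12.symm hd13.symm hd23' hd12'.symm hd13'.symm
      hbc1 hca1 hab1 hbc2 hca2 hab2
end

section
/- Let G be a planar digraph with g(G) = 3 whose underlying graph is a partial 3-tree (subgraph of a 3-tree). Then ν(G) = 3, i.e., the arcs of G admit three pairwise disjoint dicycle-transversals. -/
/-- The relation giving a complete graph (triangle) on the three vertices `a, b, c`. -/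
def triRel {V : Type*} (a b c : V) : V → V → Prop := fun x y =>
  x ∈ ({a, b, c} : Set V) ∧ y ∈ ({a, b, c} : Set V)

/-- `IsThreeTree G S` : the graph `G` with vertex support `S` is a 3-tree, i.e. it is
obtained from a triangle `K₃` by repeatedly choosing a triangle in the current graph and
adding a new vertex adjacent to exactly its three vertices. -/
inductive IsThreeTree {V : Type*} [DecidableEq V] : SimpleGraph V → Finset V → Prop
  | base (a b c : V) (hab : a ≠ b) (hac : a ≠ c) (hbc : b ≠ c) :
      IsThreeTree (SimpleGraph.fromRel (triRel a b c)) {a, b, c}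
  | step (G : SimpleGraph V) (S : Finset V) (a b c v : V)
      (hG : IsThreeTree G S)
      (ha : a ∈ S) (hb : b ∈ S) (hc : c ∈ S) (hv : v ∉ S)
      (hab : G.Adj a b) (hbc : G.Adj b c) (hac : G.Adj a c) :
      IsThreeTree
        (G ⊔ SimpleGraph.fromRel (fun x y => x = v ∧ y ∈ ({a, b, c} : Set V)))
        (insert v S)

/-- `H` is a minor of `G`: there are pairwise disjoint nonempty connected branch sets in `G`,
one for each vertex of `H`, such that every edge of `H` is realized by an edge of `G`
between the corresponding branch sets. -/
def IsMinorOf {W V : Type*} (H : SimpleGraph W) (G : SimpleGraph V) : Prop :=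
  ∃ f : W → Set V,
    (∀ w, (f w).Nonempty) ∧
    (∀ w, (G.induce (f w)).Connected) ∧
    (Pairwise fun w₁ w₂ => Disjoint (f w₁) (f w₂)) ∧
    ∀ w₁ w₂, H.Adj w₁ w₂ → ∃ a ∈ f w₁, ∃ b ∈ f w₂, G.Adj a b

/-- `K₅ − e`: the complete graph on five vertices with one edge removed. -/
def K5e : SimpleGraph (Fin 5) := (SimpleGraph.completeGraph (Fin 5)).deleteEdges {s(0, 1)}

/-- A graph is planar iff it has no `K₅` minor and no `K₃,₃` minor (Wagner's theorem). -/
def IsPlanar {V : Type*} (G : SimpleGraph V) : Prop :=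
  ¬ IsMinorOf (SimpleGraph.completeGraph (Fin 5)) G ∧
    ¬ IsMinorOf (completeBipartiteGraph (Fin 3) (Fin 3)) G


section AuxProof
open Finset


/-- rank of index `i` in the values of `g`. -/
def rankIn (g : Fin 3 → ℚ) (i : Fin 3) : ℕ := (univ.filter fun u => g u < g i).card

lemma rankIn_lt_three (g : Fin 3 → ℚ) (i : Fin 3) : rankIn g i < 3 := by
  have h : (univ.filter fun u => g u < g i) ⊆ univ.erase i := by
    intro u hu
    rcases mem_filter.1 hu with ⟨_, hlt⟩
    refine mem_erase.2 ⟨?_, mem_univ u⟩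
    rintro rfl; exact lt_irrefl _ hlt
  have := card_le_card h
  have h2 : (univ.erase i).card = 2 := by
    rw [card_erase_of_mem (mem_univ i)]; simp
  unfold rankIn; omega

lemma rankIn_lt_of_lt (g : Fin 3 → ℚ) {i j : Fin 3} (h : g i < g j) :
    rankIn g i < rankIn g j := by
  apply card_lt_card
  rw [Finset.ssubset_iff_of_subset]
  · exact ⟨i, mem_filter.2 ⟨mem_univ i, h⟩, fun hc => lt_irrefl _ (mem_filter.1 hc).2⟩
  · intro u hu
    rcases mem_filter.1 hu with ⟨_, hlt⟩
    exact mem_filter.2 ⟨mem_univ u, lt_trans hlt h⟩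

lemma rankIn_lt_iff (g : Fin 3 → ℚ) (hg : Function.Injective g) {i j : Fin 3} :
    rankIn g i < rankIn g j ↔ g i < g j := by
  constructor
  · intro h
    rcases lt_trichotomy (g i) (g j) with h' | h' | h'
    · exact h'
    · exact absurd (hg h') (by rintro rfl; exact lt_irrefl _ h)
    · exact absurd (rankIn_lt_of_lt g h') (by omega)
  · exact rankIn_lt_of_lt g

lemma place (g : Fin 3 → ℚ) (hg : Function.Injective g) (n : ℕ) :
    ∃ q : ℚ, ∀ i, g i ≠ q ∧ (g i < q ↔ rankIn g i < n) := by
  classical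
  set T : Finset (Fin 3) := univ.filter fun i => rankIn g i < n with hT
  have key : ∀ i ∈ T, ∀ j ∈ univ \ T, g i < g j := by
    intro i hi j hj
    have h1 : rankIn g i < n := (mem_filter.1 hi).2
    have h2 : ¬ rankIn g j < n := fun hc => (mem_sdiff.1 hj).2 (mem_filter.2 ⟨mem_univ j, hc⟩)
    exact (rankIn_lt_iff g hg).1 (by omega)
  rcases eq_empty_or_nonempty T with hTe | hTne
  · refine ⟨univ.inf' ⟨0, mem_univ 0⟩ g - 1, fun i => ?_⟩
    have h1 : univ.inf' ⟨0, mem_univ 0⟩ g ≤ g i := inf'_le _ (mem_univ i)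
    have h2 : ¬ rankIn g i < n := by
      intro hc
      have : i ∈ T := mem_filter.2 ⟨mem_univ i, hc⟩
      rw [hTe] at this; exact absurd this (notMem_empty i)
    constructor
    · intro hc; rw [hc] at h1; linarith
    · constructor
      · intro hc; linarith
      · intro hc; exact absurd hc h2
  · rcases eq_empty_or_nonempty (univ \ T) with hCe | hCne
    · refine ⟨univ.sup' ⟨0, mem_univ 0⟩ g + 1, fun i => ?_⟩
      have h1 : g i ≤ univ.sup' ⟨0, mem_univ 0⟩ g := le_sup' _ (mem_univ i)
      have h2 : rankIn g i < n := by
        by_contra hc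
        have : i ∈ univ \ T := mem_sdiff.2 ⟨mem_univ i, fun hm => hc (mem_filter.1 hm).2⟩
        rw [hCe] at this; exact absurd this (notMem_empty i)
      exact ⟨by intro hc; rw [hc] at h1; linarith, by constructor <;> intro <;> [exact h2; linarith]⟩
    · have hlt : T.sup' hTne g < (univ \ T).inf' hCne g := by
        rw [Finset.sup'_lt_iff]
        intro i hi
        rw [Finset.lt_inf'_iff]
        intro j hj
        exact key i hi j hj
      refine ⟨(T.sup' hTne g + (univ \ T).inf' hCne g) / 2, fun i => ?_⟩
      by_cases hi : i ∈ T
      · have h1 : g i ≤ T.sup' hTne g := le_sup' _ hi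
        have h2 : rankIn g i < n := (mem_filter.1 hi).2
        constructor
        · intro hc; rw [hc] at h1; linarith
        · constructor <;> intro <;> [exact h2; linarith]
      · have hi' : i ∈ univ \ T := mem_sdiff.2 ⟨mem_univ i, hi⟩
        have h1 : (univ \ T).inf' hCne g ≤ g i := inf'_le _ hi'
        have h2 : ¬ rankIn g i < n := fun hc => hi (mem_filter.2 ⟨mem_univ i, hc⟩)
        constructor
        · intro hc; rw [hc] at h1; linarith
        · constructor
          · intro hc; linarith
          · intro hc; exact absurd hc h2

lemma count_split (x y : Fin 3 → ℚ) (h : ∀ k, x k ≠ y k) :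
    (univ.filter fun k => x k < y k).card + (univ.filter fun k => y k < x k).card = 3 := by
  classical
  have he : (univ.filter fun k => y k < x k) = univ.filter fun k => ¬ x k < y k := by
    apply filter_congr
    intro k _
    constructor
    · exact fun h' => asymm h'
    · intro h'; rcases lt_or_gt_of_ne (h k) with h'' | h''
      · exact absurd h'' h'
      · exact h''
  rw [he, Finset.card_filter_add_card_filter_not]
  simp

set_option maxHeartbeats 4000000 in
set_option maxRecDepth 10000 in
lemma decide_step : ∀ σ : Fin 3 → Equiv.Perm (Fin 3),
    (∀ i j : Fin 3, i ≠ j → ∃ k, σ k i < σ k j) →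
    ∀ d : Fin 3 → Bool, ∃ s : Fin 3 → Fin 4,
      ∀ i, (Finset.univ.filter fun k => (σ k i).val < (s k).val).card
        = if d i then 2 else 1 := by decide

set_option maxHeartbeats 4000000 in
set_option maxRecDepth 10000 in
set_option synthInstance.maxSize 2048 in
set_option synthInstance.maxHeartbeats 400000 in
lemma decide_base : ∀ o : Fin 3 → Fin 3 → Bool,
    (∀ i j, o i j = true → o j i = true → False) →
    ∃ σ : Fin 3 → Equiv.Perm (Fin 3),
      (∀ i j : Fin 3, i ≠ j → ∃ k, σ k i < σ k j) ∧
      (∀ i j, o i j = true →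
        2 ≤ (Finset.univ.filter fun k => (σ k i).val < (σ k j).val).card) := by decide

lemma threeTree_support {V : Type*} [DecidableEq V] {G : SimpleGraph V} {S : Finset V}
    (h : IsThreeTree G S) : ∀ u w, G.Adj u w → u ∈ S ∧ w ∈ S := by
  induction h with
  | base a b c hab hac hbc =>
    intro u w huw
    rw [SimpleGraph.fromRel_adj] at huw
    obtain ⟨hne, h | h⟩ := huw <;> obtain ⟨h1, h2⟩ := h <;>
      simp only [Set.mem_insert_iff, Set.mem_singleton_iff] at h1 h2 <;>
      constructor <;> simp [h1, h2] <;> tauto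
  | step G S a b c v hG ha hb hc hv hab hbc hac ih =>
    intro u w huw
    rcases huw with huw | huw
    · obtain ⟨h1, h2⟩ := ih u w huw
      exact ⟨mem_insert_of_mem h1, mem_insert_of_mem h2⟩
    · rw [SimpleGraph.fromRel_adj] at huw
      obtain ⟨hne, h | h⟩ := huw <;> obtain ⟨h1, h2⟩ := h <;>
        simp only [Set.mem_insert_iff, Set.mem_singleton_iff] at h2 <;>
        subst h1
      · rcases h2 with rfl | rfl | rfl
        · exact ⟨mem_insert_self _ _, mem_insert_of_mem ha⟩
        · exact ⟨mem_insert_self _ _, mem_insert_of_mem hb⟩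
        · exact ⟨mem_insert_self _ _, mem_insert_of_mem hc⟩
      · rcases h2 with rfl | rfl | rfl
        · exact ⟨mem_insert_of_mem ha, mem_insert_self _ _⟩
        · exact ⟨mem_insert_of_mem hb, mem_insert_self _ _⟩
        · exact ⟨mem_insert_of_mem hc, mem_insert_self _ _⟩

lemma main_lemma {V : Type*} [DecidableEq V] (A : V → V → Prop)
    (hnd : ∀ u w, A u w → A w u → False) :
    ∀ {G : SimpleGraph V} {S : Finset V}, IsThreeTree G S →
    (∀ u w, u ∈ S → w ∈ S → A u w → G.Adj u w) →
    ∃ f : Fin 3 → V → ℚ,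
      (∀ k u w, G.Adj u w → f k u ≠ f k w) ∧
      (∀ u w, G.Adj u w → ∃ k, f k u < f k w) ∧
      (∀ u w, u ∈ S → w ∈ S → A u w →
        2 ≤ (univ.filter fun k : Fin 3 => f k u < f k w).card) := by
  intro G S h
  induction h with
  | base a b c hab hac hbc =>
    intro hA
    classical
    obtain ⟨vtx, hv0, hv1, hv2⟩ : ∃ vtx : Fin 3 → V, vtx 0 = a ∧ vtx 1 = b ∧ vtx 2 = c :=
      ⟨![a, b, c], rfl, rfl, rfl⟩
    have hvtxne : ∀ i j : Fin 3, i ≠ j → vtx i ≠ vtx j := by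
      intro i j hij
      fin_cases i <;> fin_cases j <;>
        simp_all [hv0, hv1, hv2, Ne.symm hab, Ne.symm hac, Ne.symm hbc]
    obtain ⟨σ, hmix, hcnt⟩ := decide_base
      (fun i j => decide (A (vtx i) (vtx j)))
      (by
        intro i j h1 h2
        rw [decide_eq_true_eq] at h1 h2
        exact hnd _ _ h1 h2)
    obtain ⟨f, hfv⟩ : ∃ f : Fin 3 → V → ℚ, ∀ k i, f k (vtx i) = ((σ k i).val : ℚ) := by
      refine ⟨fun k x => if x = vtx 0 then ((σ k 0).val : ℚ) else if x = vtx 1 then ((σ k 1).val : ℚ)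
        else ((σ k 2).val : ℚ), fun k i => ?_⟩
      have h10 := hvtxne 1 0 (by decide)
      have h20 := hvtxne 2 0 (by decide)
      have h21 := hvtxne 2 1 (by decide)
      fin_cases i <;> simp [h10, h20, h21]
    have hidx : ∀ u, u = a ∨ u = b ∨ u = c → ∃ i, vtx i = u := by
      rintro u (rfl | rfl | rfl)
      exacts [⟨0, hv0⟩, ⟨1, hv1⟩, ⟨2, hv2⟩]
    have hmem : ∀ u w, (SimpleGraph.fromRel (triRel a b c)).Adj u w →
        (u = a ∨ u = b ∨ u = c) ∧ (w = a ∨ w = b ∨ w = c) := by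
      intro u w huw
      rw [SimpleGraph.fromRel_adj] at huw
      obtain ⟨hne, h | h⟩ := huw <;> obtain ⟨h1, h2⟩ := h <;>
        simp only [Set.mem_insert_iff, Set.mem_singleton_iff] at h1 h2 <;> exact ⟨by tauto, by tauto⟩
    refine ⟨f, ?_, ?_, ?_⟩
    · intro k u w huw
      have hne := huw.ne
      obtain ⟨hu, hw⟩ := hmem u w huw
      obtain ⟨i, rfl⟩ := hidx u hu
      obtain ⟨j, rfl⟩ := hidx w hw
      have hij : i ≠ j := fun e => hne (congrArg vtx e)
      rw [hfv, hfv]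
      intro hcast
      exact hij ((σ k).injective (Fin.val_injective (Nat.cast_injective hcast)))
    · intro u w huw
      have hne := huw.ne
      obtain ⟨hu, hw⟩ := hmem u w huw
      obtain ⟨i, rfl⟩ := hidx u hu
      obtain ⟨j, rfl⟩ := hidx w hw
      have hij : i ≠ j := fun e => hne (congrArg vtx e)
      obtain ⟨k, hk⟩ := hmix i j hij
      exact ⟨k, by rw [hfv, hfv]; exact_mod_cast hk⟩
    · intro u w hu hw hAuw
      simp only [Finset.mem_insert, Finset.mem_singleton] at hu hw
      obtain ⟨i, rfl⟩ := hidx u hu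
      obtain ⟨j, rfl⟩ := hidx w hw
      have hcount := hcnt i j (by rw [decide_eq_true_eq]; exact hAuw)
      have hfe : (univ.filter fun k : Fin 3 => f k (vtx i) < f k (vtx j))
          = univ.filter fun k => (σ k i).val < (σ k j).val := by
        apply filter_congr
        intro k _
        rw [hfv, hfv]
        exact_mod_cast Iff.rfl
      rw [hfe]
      exact hcount
  | step G S a b c v hG ha hb hc hv hab hbc hac ih =>
    intro hA
    classical
    have hAG : ∀ u w, u ∈ S → w ∈ S → A u w → G.Adj u w := by
      intro u w hu hw hAuw
      have h' := hA u w (mem_insert_of_mem hu) (mem_insert_of_mem hw) hAuw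
      rw [SimpleGraph.sup_adj] at h'
      rcases h' with h' | h'
      · exact h'
      · rw [SimpleGraph.fromRel_adj] at h'
        obtain ⟨hne, h'' | h''⟩ := h'
        · obtain ⟨h1, -⟩ := h''; exact absurd (h1 ▸ hu) hv
        · obtain ⟨h1, -⟩ := h''; exact absurd (h1 ▸ hw) hv
    obtain ⟨f, h1, h2, h3⟩ := ih hAG
    obtain ⟨vtx, hv0, hv1, hv2⟩ : ∃ vtx : Fin 3 → V, vtx 0 = a ∧ vtx 1 = b ∧ vtx 2 = c :=
      ⟨![a, b, c], rfl, rfl, rfl⟩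
    have hadjv : ∀ i j : Fin 3, i ≠ j → G.Adj (vtx i) (vtx j) := by
      intro i j hij
      fin_cases i <;> fin_cases j <;> simp_all [hv0, hv1, hv2, hab.symm, hbc.symm, hac.symm]
    have hvtxS : ∀ i, vtx i ∈ S := by
      intro i; fin_cases i <;> simp [hv0, hv1, hv2, ha, hb, hc]
    have hginj : ∀ k, Function.Injective (fun i => f k (vtx i)) := by
      intro k i j hij
      by_contra hne
      exact h1 k _ _ (hadjv i j hne) hij
    have hrlt : ∀ k (i j : Fin 3), rankIn (fun u => f k (vtx u)) i < rankIn (fun u => f k (vtx u)) j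
        ↔ f k (vtx i) < f k (vtx j) := fun k i j => rankIn_lt_iff _ (hginj k)
    obtain ⟨σ, hσ⟩ : ∃ σ : Fin 3 → Equiv.Perm (Fin 3),
        ∀ k i, (σ k i).val = rankIn (fun u => f k (vtx u)) i := by
      refine ⟨fun k => Equiv.ofBijective
        (fun i => (⟨rankIn (fun u => f k (vtx u)) i, rankIn_lt_three _ i⟩ : Fin 3)) ?_,
        fun k i => rfl⟩
      refine (Fintype.bijective_iff_injective_and_card _).2 ⟨?_, rfl⟩
      intro i j hij
      simp only [Fin.mk.injEq] at hij
      by_contra hne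
      have hfne : f k (vtx i) ≠ f k (vtx j) := fun e => hne (hginj k e)
      rcases lt_or_gt_of_ne hfne with h' | h'
      · have := (hrlt k i j).2 h'; omega
      · have := (hrlt k j i).2 h'; omega
    have hmix : ∀ i j : Fin 3, i ≠ j → ∃ k, σ k i < σ k j := by
      intro i j hij
      obtain ⟨k, hk⟩ := h2 _ _ (hadjv i j hij)
      refine ⟨k, ?_⟩
      rw [Fin.lt_def, hσ, hσ]
      exact (hrlt k i j).2 hk
    obtain ⟨s, hs⟩ := decide_step σ hmix (fun i => decide (A (vtx i) v))
    choose q hq using fun k => place (fun u => f k (vtx u)) (hginj k) (s k).val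
    set f' : Fin 3 → V → ℚ := fun k => Function.update (f k) v (q k) with hf'
    have hfS : ∀ k u, u ∈ S → f' k u = f k u := by
      intro k u hu
      have hne : u ≠ v := by rintro rfl; exact hv hu
      exact Function.update_of_ne hne _ _
    have hfv' : ∀ k, f' k v = q k := fun k => Function.update_self _ _ _
    have hfvtx : ∀ k i, f' k (vtx i) = f k (vtx i) := fun k i => hfS k _ (hvtxS i)
    have hcnt1 : ∀ i, (univ.filter fun k : Fin 3 => f' k (vtx i) < f' k v).card
        = if decide (A (vtx i) v) then 2 else 1 := by
      intro i
      rw [← hs i]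
      apply congrArg Finset.card
      apply filter_congr
      intro k _
      rw [hfvtx, hfv', (hq k i).2, hσ]
    have hne1 : ∀ k i, f' k (vtx i) ≠ f' k v := by
      intro k i; rw [hfvtx, hfv']; exact (hq k i).1
    have hcnt2 : ∀ i, (univ.filter fun k : Fin 3 => f' k v < f' k (vtx i)).card
        = 3 - (if decide (A (vtx i) v) then 2 else 1) := by
      intro i
      have hsp := count_split (fun k => f' k (vtx i)) (fun k => f' k v) (fun k => hne1 k i)
      rw [hcnt1 i] at hsp
      cases hdec : decide (A (vtx i) v) <;> rw [hdec] at hsp <;> simp at hsp ⊢ <;> omega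
    have hidx : ∀ u, u ∈ ({a, b, c} : Set V) → ∃ i, vtx i = u := by
      intro u hu
      simp only [Set.mem_insert_iff, Set.mem_singleton_iff] at hu
      rcases hu with rfl | rfl | rfl
      exacts [⟨0, hv0⟩, ⟨1, hv1⟩, ⟨2, hv2⟩]
    refine ⟨f', ?_, ?_, ?_⟩
    · intro k u w huw
      rw [SimpleGraph.sup_adj] at huw
      rcases huw with huw | huw
      · obtain ⟨huS, hwS⟩ := threeTree_support hG u w huw
        rw [hfS k u huS, hfS k w hwS]
        exact h1 k u w huw
      · rw [SimpleGraph.fromRel_adj] at huw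
        obtain ⟨hne, h' | h'⟩ := huw
        · obtain ⟨rfl, hw'⟩ := h'
          obtain ⟨i, rfl⟩ := hidx w hw'
          rw [hfv', hfvtx]
          exact fun e => (hq k i).1 e.symm
        · obtain ⟨rfl, hu'⟩ := h'
          obtain ⟨i, rfl⟩ := hidx u hu'
          rw [hfv', hfvtx]
          exact (hq k i).1
    · intro u w huw
      rw [SimpleGraph.sup_adj] at huw
      rcases huw with huw | huw
      · obtain ⟨huS, hwS⟩ := threeTree_support hG u w huw
        obtain ⟨k, hk⟩ := h2 u w huw
        exact ⟨k, by rw [hfS k u huS, hfS k w hwS]; exact hk⟩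
      · rw [SimpleGraph.fromRel_adj] at huw
        obtain ⟨hne, h' | h'⟩ := huw
        · obtain ⟨rfl, hw'⟩ := h'
          obtain ⟨i, rfl⟩ := hidx w hw'
          have hc := hcnt2 i
          have hpos : 0 < (univ.filter fun k : Fin 3 => f' k u < f' k (vtx i)).card := by
            cases hdec : decide (A (vtx i) u) <;> rw [hdec] at hc <;> simp at hc <;> omega
          obtain ⟨k, hk⟩ := card_pos.1 hpos
          exact ⟨k, (mem_filter.1 hk).2⟩
        · obtain ⟨rfl, hu'⟩ := h'
          obtain ⟨i, rfl⟩ := hidx u hu'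
          have hc := hcnt1 i
          have hpos : 0 < (univ.filter fun k : Fin 3 => f' k (vtx i) < f' k w).card := by
            cases hdec : decide (A (vtx i) w) <;> rw [hdec] at hc <;> simp at hc <;> omega
          obtain ⟨k, hk⟩ := card_pos.1 hpos
          exact ⟨k, (mem_filter.1 hk).2⟩
    · intro u w hu hw hAuw
      rcases Finset.mem_insert.1 hu with rfl | huS
      · rcases Finset.mem_insert.1 hw with rfl | hwS
        · exact absurd hAuw (fun h => hnd _ _ h h)
        · have hadj' := hA u w (mem_insert_self u S) (mem_insert_of_mem hwS) hAuw
          rw [SimpleGraph.sup_adj] at hadj'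
          rcases hadj' with h' | h'
          · exact absurd (threeTree_support hG u w h').1 hv
          · rw [SimpleGraph.fromRel_adj] at h'
            obtain ⟨hne, h'' | h''⟩ := h'
            · obtain ⟨-, hw'⟩ := h''
              obtain ⟨i, rfl⟩ := hidx w hw'
              have hdi : decide (A (vtx i) u) = false := by
                simp only [decide_eq_false_iff_not]
                exact fun h => hnd _ _ hAuw h
              have hc := hcnt2 i
              rw [hdi] at hc
              simp at hc
              omega
            · obtain ⟨h1', -⟩ := h''
              exact absurd (h1' ▸ hwS) hv
      · rcases Finset.mem_insert.1 hw with rfl | hwS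
        · have hadj' := hA u w (mem_insert_of_mem huS) (mem_insert_self w S) hAuw
          rw [SimpleGraph.sup_adj] at hadj'
          rcases hadj' with h' | h'
          · exact absurd (threeTree_support hG u w h').2 hv
          · rw [SimpleGraph.fromRel_adj] at h'
            obtain ⟨hne, h'' | h''⟩ := h'
            · obtain ⟨h1', -⟩ := h''
              exact absurd (h1' ▸ huS) hv
            · obtain ⟨-, hu'⟩ := h''
              obtain ⟨i, rfl⟩ := hidx u hu'
              have hdi : decide (A (vtx i) w) = true := by
                simp only [decide_eq_true_eq]
                exact hAuw
              have hc := hcnt1 i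
              rw [hdi] at hc
              simp at hc
              omega
        · have hfe : (univ.filter fun k : Fin 3 => f' k u < f' k w)
              = univ.filter fun k => f k u < f k w := by
            apply filter_congr
            intro k _
            rw [hfS k u huS, hfS k w hwS]
          rw [hfe]
          exact h3 u w huS hwS hAuw

lemma chain_lt {V : Type*} (A : V → V → Prop) (g : V → ℚ) :
    ∀ (l : List V) (x y : V), List.Chain A x (l ++ [y]) →
      (∀ p ∈ List.zip (x :: l) (l ++ [y]), A p.1 p.2 → g p.1 < g p.2) →
      g x < g y := by
  intro l
  induction l with
  | nil =>
    intro x y hch hp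
    rw [List.nil_append, List.Chain, List.isChain_pair] at hch
    exact hp (x, y) (by simp) hch
  | cons a t ih =>
    intro x y hch hp
    rw [List.cons_append, List.Chain, List.isChain_cons_cons] at hch
    obtain ⟨hxa, hch'⟩ := hch
    have h1 : g x < g a :=
      hp (x, a) (by rw [List.cons_append, List.zip_cons_cons]; exact List.mem_cons_self) hxa
    have h2 : g a < g y := by
      apply ih a y hch'
      intro p hp' hA
      apply hp p ?_ hA
      rw [List.cons_append, List.zip_cons_cons]
      exact List.mem_cons_of_mem _ hp'
    linarith


/-- If `G` is a planar digraph with `g(G) = 3` whose underlying graph is a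
partial 3-tree (a subgraph of a 3-tree), then `ν(G) = 3`: the arcs admit three pairwise
disjoint dicycle-transversals. -/
theorem nu_eq_three_of_partial_threeTree {V : Type*} [DecidableEq V]
    (A : V → V → Prop)
    (hirr : ∀ v, ¬ A v v)
    (hpartial : ∃ (H : SimpleGraph V) (S : Finset V),
      IsThreeTree H S ∧ SimpleGraph.fromRel A ≤ H)
    (hplanar : IsPlanar (SimpleGraph.fromRel A))
    (hg : digirth A = 3) :
    HasPacking A 3 ∧ dinu A = 3 := by
  classical
  obtain ⟨H, S, hTt, hle⟩ := hpartial
  have hnd : ∀ u w, A u w → A w u → False := by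
    intro u w hA1 hA2
    have hne : u ≠ w := by rintro rfl; exact hirr u hA1
    have hd : IsDicycle A [u, w] := by
      refine ⟨?_, ?_⟩
      · simp [hne]
      · simp [List.Chain, List.isChain_cons_cons, hA1, hA2]
    have h2m : 2 ∈ {n | ∃ l, IsDicycle A l ∧ l.length = n} := ⟨[u, w], hd, rfl⟩
    have hle2 : digirth A ≤ 2 := Nat.sInf_le h2m
    omega
  have hAadj : ∀ u w, A u w → (SimpleGraph.fromRel A).Adj u w := by
    intro u w h
    rw [SimpleGraph.fromRel_adj]
    exact ⟨fun e => hirr u (e ▸ h), Or.inl h⟩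
  have harc : ∀ u w, A u w → u ∈ S ∧ w ∈ S :=
    fun u w h => threeTree_support hTt u w (hle (hAadj u w h))
  obtain ⟨f, h1, h2, h3⟩ := main_lemma A hnd hTt (fun u w _ _ h => hle (hAadj u w h))
  set T : Fin 3 → Set (V × V) := fun k => {e | A e.1 e.2 ∧ ¬ f k e.1 < f k e.2} with hTdef
  have htrans : ∀ k, IsTransversal A (T k) := by
    intro k
    constructor
    · rintro e ⟨h, -⟩; exact h
    · intro l hl
      by_contra hcon
      push_neg at hcon
      cases l with
      | nil => exact hl
      | cons x t =>
        obtain ⟨hnodup, hch⟩ := hl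
        have hlt : f k x < f k x := by
          apply chain_lt A (f k) t x x hch
          intro p hp hA'
          by_contra hplt
          exact hcon p hp ⟨hA', hplt⟩
        exact lt_irrefl _ hlt
  have hdisj : Pairwise fun i j : Fin 3 => Disjoint (T i) (T j) := by
    intro i j hij
    rw [Set.disjoint_left]
    rintro ⟨u, w⟩ ⟨hA1, hb1⟩ ⟨hA2, hb2⟩
    obtain ⟨huS, hwS⟩ := harc u w hA1
    have h32 := h3 u w huS hwS hA1
    have hsub : (univ.filter fun k : Fin 3 => f k u < f k w) ⊆ ({i, j}ᶜ : Finset (Fin 3)) := by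
      intro k hk
      have hk' := (mem_filter.1 hk).2
      simp only [Finset.mem_compl, Finset.mem_insert, Finset.mem_singleton]
      push_neg
      constructor
      · rintro rfl; exact hb1 hk'
      · rintro rfl; exact hb2 hk'
    have hcard := card_le_card hsub
    have hcc : ({i, j}ᶜ : Finset (Fin 3)).card = 1 := by
      rw [Finset.card_compl, Finset.card_insert_of_notMem (by simpa using hij),
        Finset.card_singleton]
      simp
    omega
  have hpack : HasPacking A 3 := ⟨T, htrans, hdisj⟩
  refine ⟨hpack, ?_⟩
  have hne : {n | ∃ l, IsDicycle A l ∧ l.length = n}.Nonempty := by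
    by_contra hcon
    rw [Set.not_nonempty_iff_eq_empty] at hcon
    have h0 : digirth A = 0 := by unfold digirth; rw [hcon]; exact Nat.sInf_empty
    omega
  have hmem := Nat.sInf_mem hne
  rw [show sInf {n | ∃ l, IsDicycle A l ∧ l.length = n} = 3 from hg] at hmem
  obtain ⟨l, hl, hlen⟩ := hmem
  have hclen : (cycleArcs l).length ≤ 3 := by
    cases l with
    | nil => simp [cycleArcs]
    | cons x t =>
      have hz : (cycleArcs (x :: t)).length = min (x :: t).length (t ++ [x]).length :=
        List.length_zip
      simp only [List.length_cons, List.length_append, List.length_singleton] at hz hlen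
      omega
  have hbound : ∀ k, HasPacking A k → k ≤ 3 := by
    intro k hk
    by_contra hk3
    push_neg at hk3
    obtain ⟨Tk, hTk, hdisjk⟩ := hk
    choose e he1 he2 using fun i : Fin k => (hTk i).2 l hl
    have hmap : ∀ i : Fin k, i ∈ (univ : Finset (Fin k)) → e i ∈ (cycleArcs l).toFinset :=
      fun i _ => List.mem_toFinset.2 (he1 i)
    have hcard : (cycleArcs l).toFinset.card < (univ : Finset (Fin k)).card := by
      have h1' := (cycleArcs l).toFinset_card_le
      rw [Finset.card_univ, Fintype.card_fin]
      omega
    obtain ⟨i, -, j, -, hij, heq⟩ := Finset.exists_ne_map_eq_of_card_lt_of_maps_to hcard hmap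
    exact Set.disjoint_left.1 (hdisjk hij) (he2 i) (heq ▸ he2 j)
  apply le_antisymm
  · exact csSup_le ⟨3, hpack⟩ (fun k hk => hbound k hk)
  · exact le_csSup ⟨3, fun k hk => hbound k hk⟩ hpack

end AuxProof
end
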